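/- The Z-module Z/pZ ⊕ Z/p²Z (p prime) is lifting, hence every direct summand of it is H-supplemented, but it does not satisfy condition (D3). -/

import Mathlib

universe u v

/-- `N` is a small (superfluous) submodule of `M`. -/
def SmallSub (R : Type v) [Ring R] {M : Type u} [AddCommGroup M] [Module R M]
    (N : Submodule R M) : Prop :=
  ∀ X : Submodule R M, N ⊔ X = ⊤ → X = ⊤

/-- `D` is a direct summand of `M`. -/
def IsDirectSummand (R : Type v) [Ring R] {M : Type u} [AddCommGroup M] [Module R M]
    (D : Submodule R M) : Prop :=
  ∃ D' : Submodule R M, IsCompl D D'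

/-- `M` is H-supplemented: for every submodule `X` there is a direct summand `D`
with `(X+D)/D ≪ M/D` and `(X+D)/X ≪ M/X`. -/
def HSupplemented (R : Type v) [Ring R] (M : Type u) [AddCommGroup M] [Module R M] : Prop :=
  ∀ X : Submodule R M, ∃ D : Submodule R M, IsDirectSummand R D ∧
    SmallSub R ((X ⊔ D).map D.mkQ) ∧ SmallSub R ((X ⊔ D).map X.mkQ)

/-- Condition (D3). -/
def CondD3 (R : Type v) [Ring R] (M : Type u) [AddCommGroup M] [Module R M] : Prop :=
  ∀ K L : Submodule R M, IsDirectSummand R K → IsDirectSummand R L → K ⊔ L = ⊤ →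
    IsDirectSummand R (K ⊓ L)

/-- `M` is a lifting module. -/
def Lifting (R : Type v) [Ring R] (M : Type u) [AddCommGroup M] [Module R M] : Prop :=
  ∀ N : Submodule R M, ∃ K : Submodule R M, IsDirectSummand R K ∧ K ≤ N ∧
    SmallSub R (N.map K.mkQ)

section aux
variable {R : Type*} [Ring R] {M M' P : Type*}
  [AddCommGroup M] [Module R M] [AddCommGroup M'] [Module R M'] [AddCommGroup P] [Module R P]

theorem smallsub_bot' : SmallSub R (⊥ : Submodule R M) := by
  intro X hX; simpa using hX

theorem smallsub_mono' {A B : Submodule R M} (h : A ≤ B) (hB : SmallSub R B) :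
    SmallSub R A := by
  intro X hX
  have h2 : ⊤ ≤ B ⊔ X := hX ▸ sup_le_sup_right h X
  exact hB X (top_le_iff.mp h2)

theorem smallsub_map' {f : M →ₗ[R] M'} (hf : Function.Surjective f) {A : Submodule R M}
    (hA : SmallSub R A) : SmallSub R (A.map f) := by
  intro X hX
  have h1 : A ⊔ X.comap f = ⊤ := by
    rw [eq_top_iff]
    rintro m -
    have hm : f m ∈ A.map f ⊔ X := by rw [hX]; trivial
    obtain ⟨a, haA, x, hxX, hax⟩ := Submodule.mem_sup.mp hm
    obtain ⟨a₀, ha₀, rfl⟩ := haA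
    refine Submodule.mem_sup.mpr ⟨a₀, ha₀, m - a₀, ?_, by abel⟩
    have hx : x = f (m - a₀) := by rw [map_sub, ← hax]; abel
    simpa [Submodule.mem_comap, ← hx] using hxX
  have h2 := hA _ h1
  rw [eq_top_iff]
  rintro y -
  obtain ⟨m, rfl⟩ := hf y
  have : m ∈ X.comap f := by rw [h2]; trivial
  exact this

theorem smallsub_of_inj {f : P →ₗ[R] M'} (hf : Function.Injective f)
    {B C : Submodule R M'} (hr : LinearMap.range f = B) (hc : IsCompl B C)
    {A : Submodule R P} (hA : SmallSub R (A.map f)) : SmallSub R A := by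
  intro X hX
  have hmap : A.map f ⊔ X.map f = B := by
    rw [← Submodule.map_sup, hX, Submodule.map_top, hr]
  have h1 : A.map f ⊔ (X.map f ⊔ C) = ⊤ := by
    rw [← sup_assoc, hmap, codisjoint_iff.mp hc.codisjoint]
  have h2 := hA _ h1
  have hXB : B ≤ X.map f := by
    intro b hb
    have hb2 : b ∈ X.map f ⊔ C := by rw [h2]; trivial
    obtain ⟨x, hx, c, hcC, hxc⟩ := Submodule.mem_sup.mp hb2
    have hxB : x ∈ B := hmap ▸ Submodule.mem_sup_right hx
    have hcB : c ∈ B := by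
      have hcbx : c = b - x := by rw [← hxc]; abel
      rw [hcbx]; exact B.sub_mem hb hxB
    have hc0 : c ∈ B ⊓ C := ⟨hcB, hcC⟩
    rw [disjoint_iff.mp hc.disjoint] at hc0
    rw [← hxc, (Submodule.mem_bot _).mp hc0, add_zero]
    exact hx
  have hXt : X.map f = (⊤ : Submodule R P).map f := by
    apply le_antisymm (Submodule.map_mono le_top)
    rw [Submodule.map_top, hr]; exact hXB
  exact Submodule.map_injective_of_injective hf hXt

theorem map_mkQ_eq_bot' {K N : Submodule R M} (h : N ≤ K) : N.map K.mkQ = ⊥ := by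
  rw [eq_bot_iff]
  rintro y ⟨n, hn, rfl⟩
  simpa [Submodule.mem_bot, Submodule.Quotient.mk_eq_zero] using h hn

end aux

section aux2
variable {R : Type*} [Ring R] {M : Type*} [AddCommGroup M] [Module R M]

theorem lifting_hsupp (h : Lifting R M) : HSupplemented R M := by
  intro X
  obtain ⟨K, hKs, hKX, hsm⟩ := h X
  refine ⟨K, hKs, ?_, ?_⟩
  · rwa [sup_eq_left.mpr hKX]
  · rw [sup_eq_left.mpr hKX, map_mkQ_eq_bot' (le_refl X)]
    exact smallsub_bot'

theorem lifting_summand {D C_D : Submodule R M} (hcD : IsCompl D C_D)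
    (hM : Lifting R M) : Lifting R ↥D := by
  intro X
  obtain ⟨K, ⟨C, hKC⟩, hKN, hsmall⟩ := hM (X.map D.subtype)
  have hKD : K ≤ D := le_trans hKN (Submodule.map_subtype_le D X)
  set K' : Submodule R ↥D := K.comap D.subtype with hK'def
  refine ⟨K', ⟨C.comap D.subtype, ?_, ?_⟩, ?_, ?_⟩
  · -- disjoint
    rw [disjoint_iff, eq_bot_iff]
    rintro x ⟨hx1, hx2⟩
    have h1 : (x : M) ∈ K ⊓ C := ⟨hx1, hx2⟩
    rw [disjoint_iff.mp hKC.disjoint] at h1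
    have h2 : (x : M) = 0 := h1
    simpa [Submodule.mem_bot] using Subtype.ext h2
  · -- codisjoint
    rw [codisjoint_iff, eq_top_iff]
    rintro d -
    have hd : (d : M) ∈ K ⊔ C := by rw [codisjoint_iff.mp hKC.codisjoint]; trivial
    obtain ⟨k, hk, c, hcc, hkc⟩ := Submodule.mem_sup.mp hd
    have hkD : k ∈ D := hKD hk
    have hcD2 : c ∈ D := by
      have h3 : c = (d : M) - k := by rw [← hkc]; abel
      rw [h3]; exact D.sub_mem d.2 hkD
    refine Submodule.mem_sup.mpr ⟨⟨k, hkD⟩, hk, ⟨c, hcD2⟩, hcc, ?_⟩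
    exact Subtype.ext hkc
  · -- K' ≤ X
    intro x hx
    have hmem : (x : M) ∈ X.map D.subtype := hKN hx
    obtain ⟨x', hx', hxx⟩ := hmem
    rwa [show x' = x from Subtype.ext hxx] at hx'
  · -- smallness
    have hle : K' ≤ K.comap D.subtype := le_refl _
    set ψ : (↥D ⧸ K') →ₗ[R] (M ⧸ K) := K'.mapQ K D.subtype hle with hψdef
    have hψ_mk : ∀ d : ↥D, ψ (K'.mkQ d) = K.mkQ (d : M) := fun d => rfl
    have hinj : Function.Injective ψ := by
      rw [← LinearMap.ker_eq_bot, eq_bot_iff]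
      intro q hq
      obtain ⟨d, rfl⟩ := K'.mkQ_surjective q
      rw [LinearMap.mem_ker, hψ_mk, Submodule.mkQ_apply, Submodule.Quotient.mk_eq_zero] at hq
      rw [Submodule.mem_bot, Submodule.mkQ_apply, Submodule.Quotient.mk_eq_zero]
      exact hq
    have hrange : LinearMap.range ψ = D.map K.mkQ := by
      ext q
      constructor
      · rintro ⟨q', rfl⟩
        obtain ⟨d, rfl⟩ := K'.mkQ_surjective q'
        exact ⟨d, d.2, (hψ_mk d).symm⟩
      · rintro ⟨m, hm, rfl⟩
        exact ⟨K'.mkQ ⟨m, hm⟩, hψ_mk _⟩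
    have hcompl : IsCompl (D.map K.mkQ) (C_D.map K.mkQ) := by
      constructor
      · rw [disjoint_iff, eq_bot_iff]
        rintro q ⟨hq1, hq2⟩
        obtain ⟨d, hd, hdq⟩ := hq1
        obtain ⟨c, hcc, hcq⟩ := hq2
        have hdc : d - c ∈ K := by
          rw [← Submodule.Quotient.mk_eq_zero, Submodule.Quotient.mk_sub]
          rw [show (Submodule.Quotient.mk d : M ⧸ K) = K.mkQ d from rfl,
              show (Submodule.Quotient.mk c : M ⧸ K) = K.mkQ c from rfl, hdq, hcq, sub_self]
        have hcD3 : c ∈ D := by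
          have h4 : c = d - (d - c) := by abel
          rw [h4]; exact D.sub_mem hd (hKD hdc)
        have h5 : c ∈ D ⊓ C_D := ⟨hcD3, hcc⟩
        rw [disjoint_iff.mp hcD.disjoint] at h5
        rw [Submodule.mem_bot, ← hcq, (Submodule.mem_bot _).mp h5, map_zero]
      · rw [codisjoint_iff, eq_top_iff]
        rintro q -
        obtain ⟨m, rfl⟩ := K.mkQ_surjective q
        have hm : m ∈ D ⊔ C_D := by rw [codisjoint_iff.mp hcD.codisjoint]; trivial
        obtain ⟨d, hd, c, hcc, hdc⟩ := Submodule.mem_sup.mp hm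
        refine Submodule.mem_sup.mpr ⟨K.mkQ d, ⟨d, hd, rfl⟩, K.mkQ c, ⟨c, hcc, rfl⟩, ?_⟩
        rw [← map_add, hdc]
    have hkey : (X.map K'.mkQ).map ψ = (X.map D.subtype).map K.mkQ := by
      rw [← Submodule.map_comp, ← Submodule.map_comp]
      congr 1
    exact smallsub_of_inj hinj hrange hcompl (by rw [hkey]; exact hsmall)
end aux2

section zmod
variable (p : ℕ)

lemma zsmul_pair (k : ℤ) (a : ZMod p) (b : ZMod (p ^ 2)) :
    k • ((a, b) : ZMod p × ZMod (p ^ 2)) = ((k : ZMod p) * a, (k : ZMod (p ^ 2)) * b) := by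
  refine Prod.ext ?_ ?_ <;> simp [zsmul_eq_mul]

lemma val_cast_self (hp : p.Prime) (b : ZMod (p ^ 2)) :
    ((b.val : ℤ) : ZMod (p ^ 2)) = b := by
  haveI : NeZero (p ^ 2) := ⟨pow_ne_zero 2 hp.ne_zero⟩
  push_cast
  exact ZMod.natCast_val b |>.trans (ZMod.cast_id _ b)

lemma val_cast_self' (hp : p.Prime) (a : ZMod p) :
    ((a.val : ℤ) : ZMod p) = a := by
  haveI : NeZero p := ⟨hp.ne_zero⟩
  push_cast
  exact ZMod.natCast_val a |>.trans (ZMod.cast_id _ a)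

lemma cast_zero_descend (hp : p.Prime) {a : ℤ} (h : (a : ZMod (p ^ 2)) = 0) :
    (a : ZMod p) = 0 := by
  rw [ZMod.intCast_zmod_eq_zero_iff_dvd] at h ⊢
  exact dvd_trans (by exact_mod_cast dvd_pow_self (p : ℤ) (two_ne_zero)) h

lemma not_unit_imp (hp : p.Prime) {b : ZMod (p ^ 2)} (h : ¬ IsUnit b) :
    ∃ t : ZMod (p ^ 2), b = (p : ZMod (p ^ 2)) * t := by
  haveI : NeZero (p ^ 2) := ⟨pow_ne_zero 2 hp.ne_zero⟩
  have hdvd : p ∣ b.val := by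
    by_contra hnd
    apply h
    have hcop : Nat.Coprime b.val p := (Nat.coprime_comm.mp ((hp.coprime_iff_not_dvd).mpr hnd))
    have hcop2 : Nat.Coprime b.val (p ^ 2) := hcop.pow_right 2
    have := (ZMod.isUnit_iff_coprime b.val (p ^ 2)).mpr hcop2
    rwa [ZMod.natCast_val, ZMod.cast_id] at this
  obtain ⟨n, hn⟩ := hdvd
  refine ⟨(n : ZMod (p ^ 2)), ?_⟩
  have hb : ((b.val : ℕ) : ZMod (p ^ 2)) = b := by
    rw [ZMod.natCast_val, ZMod.cast_id]
  rw [← hb, hn]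
  push_cast
  ring

end zmod

section main
variable (p : ℕ)

open Submodule

lemma p2_cast_zero : ((p : ZMod (p ^ 2)) * (p : ZMod (p ^ 2))) = 0 := by
  rw [← Nat.cast_mul, ← pow_two, ZMod.natCast_self]

lemma S_small (hp : p.Prime) :
    ∀ X : Submodule ℤ (ZMod p × ZMod (p ^ 2)),
      (span ℤ {((0 : ZMod p), (p : ZMod (p ^ 2)))}) ⊔ X = ⊤ → X = ⊤ := by
  set s₀ : ZMod p × ZMod (p ^ 2) := ((0 : ZMod p), (p : ZMod (p ^ 2))) with hs₀
  have hps : ∀ k : ℤ, (p : ℤ) • (k • s₀) = 0 := by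
    intro k
    rw [smul_smul, zsmul_pair]
    refine Prod.ext ?_ ?_ <;> simp
    push_cast
    rw [mul_comm ((p : ZMod (p ^ 2))) ((k : ZMod (p ^ 2))), mul_assoc, p2_cast_zero, mul_zero]
  intro X hX
  have h1 : ((0 : ZMod p), (1 : ZMod (p ^ 2))) ∈ (span ℤ {s₀}) ⊔ X := by
    rw [hX]; trivial
  obtain ⟨u, hu, x, hxX, hux⟩ := Submodule.mem_sup.mp h1
  obtain ⟨k, hk⟩ := Submodule.mem_span_singleton.mp hu
  have hs₀X : s₀ ∈ X := by
    have h2 : (p : ℤ) • ((0 : ZMod p), (1 : ZMod (p ^ 2))) = s₀ := by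
      rw [zsmul_pair]
      refine Prod.ext ?_ ?_ <;> simp [hs₀]
    have h3 : (p : ℤ) • (u + x) = s₀ := by rw [hux, h2]
    rw [smul_add, ← hk, hps, zero_add] at h3
    rw [← h3]
    exact X.smul_mem _ hxX
  rw [eq_top_iff]
  rintro m -
  have hm : m ∈ (span ℤ {s₀}) ⊔ X := by rw [hX]; trivial
  obtain ⟨u', hu', x', hx', h'⟩ := Submodule.mem_sup.mp hm
  obtain ⟨k', hk'⟩ := Submodule.mem_span_singleton.mp hu'
  rw [← h', ← hk']
  exact X.add_mem (X.smul_mem _ hs₀X) hx'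

lemma compl_e1 (hp : p.Prime) (e : ZMod p) :
    IsCompl (span ℤ {((e, 1) : ZMod p × ZMod (p ^ 2))})
      (span ℤ {((1, 0) : ZMod p × ZMod (p ^ 2))}) := by
  constructor
  · rw [disjoint_iff, eq_bot_iff]
    rintro x ⟨hx1, hx2⟩
    obtain ⟨a, rfl⟩ := Submodule.mem_span_singleton.mp hx1
    obtain ⟨b, hb⟩ := Submodule.mem_span_singleton.mp hx2
    rw [zsmul_pair, zsmul_pair, Prod.mk.injEq] at hb
    obtain ⟨hb1, hb2⟩ := hb
    rw [mul_zero] at hb2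
    have h2 : (a : ZMod (p ^ 2)) = 0 := by simpa using hb2.symm
    have h3 : (a : ZMod p) = 0 := cast_zero_descend p hp h2
    rw [Submodule.mem_bot, zsmul_pair]
    refine Prod.ext ?_ ?_ <;> simp [h2, h3]
  · rw [codisjoint_iff, eq_top_iff]
    rintro ⟨x, y⟩ -
    refine Submodule.mem_sup.mpr ⟨(y.val : ℤ) • ((e, 1) : ZMod p × ZMod (p ^ 2)),
      Submodule.mem_span_singleton.mpr ⟨_, rfl⟩,
      (((x - ((y.val : ℤ) : ZMod p) * e).val : ℤ)) • ((1, 0) : ZMod p × ZMod (p ^ 2)),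
      Submodule.mem_span_singleton.mpr ⟨_, rfl⟩, ?_⟩
    rw [zsmul_pair, zsmul_pair, Prod.mk_add_mk, Prod.mk.injEq]
    constructor
    · rw [val_cast_self' p hp]; ring
    · rw [val_cast_self p hp]; ring

lemma compl_1t (hp : p.Prime) (t : ZMod (p ^ 2)) :
    IsCompl (span ℤ {((1, (p : ZMod (p ^ 2)) * t) : ZMod p × ZMod (p ^ 2))})
      (span ℤ {((0, 1) : ZMod p × ZMod (p ^ 2))}) := by
  haveI : NeZero p := ⟨hp.ne_zero⟩
  constructor
  · rw [disjoint_iff, eq_bot_iff]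
    rintro x ⟨hx1, hx2⟩
    obtain ⟨a, rfl⟩ := Submodule.mem_span_singleton.mp hx1
    obtain ⟨b, hb⟩ := Submodule.mem_span_singleton.mp hx2
    rw [zsmul_pair, zsmul_pair, Prod.mk.injEq] at hb
    obtain ⟨hb1, hb2⟩ := hb
    rw [mul_zero] at hb1
    have h1 : (a : ZMod p) = 0 := by simpa using hb1.symm
    have h2 : (p : ℤ) ∣ a := (ZMod.intCast_zmod_eq_zero_iff_dvd a p).mp h1
    obtain ⟨a', rfl⟩ := h2
    rw [Submodule.mem_bot, zsmul_pair]
    refine Prod.ext ?_ ?_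
    · simp [h1]
    · show ((((p : ℤ) * a' : ℤ)) : ZMod (p ^ 2)) * ((p : ZMod (p ^ 2)) * t) = (0 : ZMod (p ^ 2))
      push_cast
      calc (p : ZMod (p ^ 2)) * (a' : ZMod (p ^ 2)) * ((p : ZMod (p ^ 2)) * t)
          = ((p : ZMod (p ^ 2)) * (p : ZMod (p ^ 2))) * ((a' : ZMod (p ^ 2)) * t) := by ring
        _ = 0 := by rw [p2_cast_zero, zero_mul]
  · rw [codisjoint_iff, eq_top_iff]
    rintro ⟨x, y⟩ -
    refine Submodule.mem_sup.mpr
      ⟨(x.val : ℤ) • ((1, (p : ZMod (p ^ 2)) * t) : ZMod p × ZMod (p ^ 2)),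
      Submodule.mem_span_singleton.mpr ⟨_, rfl⟩,
      ((y - ((x.val : ℤ) : ZMod (p ^ 2)) * ((p : ZMod (p ^ 2)) * t)).val : ℤ) •
        ((0, 1) : ZMod p × ZMod (p ^ 2)),
      Submodule.mem_span_singleton.mpr ⟨_, rfl⟩, ?_⟩
    rw [zsmul_pair, zsmul_pair, Prod.mk_add_mk, Prod.mk.injEq]
    constructor
    · rw [val_cast_self' p hp]; ring
    · rw [val_cast_self p hp]; ring

end main


open Submodule

theorem lifting_M (p : ℕ) (hp : p.Prime) : Lifting ℤ (ZMod p × ZMod (p ^ 2)) := by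
  haveI hpf : Fact p.Prime := ⟨hp⟩
  haveI : NeZero p := ⟨hp.ne_zero⟩
  haveI : NeZero (p ^ 2) := ⟨pow_ne_zero 2 hp.ne_zero⟩
  intro N
  by_cases htop : N = ⊤
  · subst htop
    refine ⟨⊤, ⟨⊥, isCompl_top_bot⟩, le_top, ?_⟩
    intro X _
    rw [eq_top_iff]
    rintro q -
    have hq0 : q = 0 := by
      obtain ⟨m, rfl⟩ := (⊤ : Submodule ℤ (ZMod p × ZMod (p ^ 2))).mkQ_surjective q
      rw [Submodule.mkQ_apply, Submodule.Quotient.mk_eq_zero]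
      trivial
    rw [hq0]; exact X.zero_mem
  by_cases h1 : ∃ v ∈ N, IsUnit v.2
  -- Case: N contains an element with unit second coordinate
  · obtain ⟨v, hvN, hv⟩ := h1
    obtain ⟨u, hu⟩ := hv
    set z : ℤ := ((((u⁻¹ : (ZMod (p ^ 2))ˣ) : ZMod (p ^ 2))).val : ℤ) with hz
    obtain ⟨e, f, hef⟩ : ∃ e f, z • v = (e, f) := ⟨_, _, rfl⟩
    have hsnd : f = 1 := by
      have h4 : (z • v).2 = (z : ZMod (p ^ 2)) * v.2 :=
        congrArg Prod.snd (zsmul_pair p z v.1 v.2)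
      have h5 : (z : ZMod (p ^ 2)) = ((u⁻¹ : (ZMod (p ^ 2))ˣ) : ZMod (p ^ 2)) :=
        val_cast_self p hp _
      rw [hef] at h4
      rw [show f = (e, f).2 from rfl, h4, h5, ← hu, Units.inv_mul]
    subst hsnd
    have hgN : ((e, (1 : ZMod (p ^ 2))) : ZMod p × ZMod (p ^ 2)) ∈ N :=
      hef ▸ N.smul_mem z hvN
    refine ⟨span ℤ {((e, 1) : ZMod p × ZMod (p ^ 2))}, ⟨_, compl_e1 p hp e⟩, ?_, ?_⟩
    · rw [span_le, Set.singleton_subset_iff]; exact hgN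
    · -- N = K here; show N.map mkQ = ⊥
      have hNK : N ≤ span ℤ {((e, 1) : ZMod p × ZMod (p ^ 2))} := by
        intro m hm
        by_cases hd0 : m.1 - ((m.2.val : ℤ) : ZMod p) * e = 0
        · refine Submodule.mem_span_singleton.mpr ⟨(m.2.val : ℤ), ?_⟩
          rw [zsmul_pair]
          refine Prod.ext ?_ ?_
          · show ((m.2.val : ℤ) : ZMod p) * e = m.1
            have := sub_eq_zero.mp hd0
            exact this.symm
          · show ((m.2.val : ℤ) : ZMod (p ^ 2)) * 1 = m.2
            rw [val_cast_self p hp, mul_one]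
        · exfalso
          apply htop
          have hdN : ((m.1 - ((m.2.val : ℤ) : ZMod p) * e, 0) : ZMod p × ZMod (p ^ 2)) ∈ N := by
            have hsub : ((m.1 - ((m.2.val : ℤ) : ZMod p) * e, 0) : ZMod p × ZMod (p ^ 2))
                = m - (m.2.val : ℤ) • ((e, 1) : ZMod p × ZMod (p ^ 2)) := by
              rw [zsmul_pair]
              refine Prod.ext ?_ ?_
              · rfl
              · show (0 : ZMod (p ^ 2)) = m.2 - ((m.2.val : ℤ) : ZMod (p ^ 2)) * 1
                rw [val_cast_self p hp, mul_one, sub_self]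
            rw [hsub]
            exact N.sub_mem hm (N.smul_mem _ hgN)
          have h10 : ((1, 0) : ZMod p × ZMod (p ^ 2)) ∈ N := by
            have hsm := N.smul_mem ((((m.1 - ((m.2.val : ℤ) : ZMod p) * e)⁻¹).val : ℤ)) hdN
            have heq : ((((m.1 - ((m.2.val : ℤ) : ZMod p) * e)⁻¹).val : ℤ)) •
                ((m.1 - ((m.2.val : ℤ) : ZMod p) * e, 0) : ZMod p × ZMod (p ^ 2))
                = ((1, 0) : ZMod p × ZMod (p ^ 2)) := by
              rw [zsmul_pair]
              refine Prod.ext ?_ ?_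
              · show _ * (m.1 - ((m.2.val : ℤ) : ZMod p) * e) = (1 : ZMod p)
                rw [val_cast_self' p hp]
                exact inv_mul_cancel₀ hd0
              · show _ * (0 : ZMod (p ^ 2)) = (0 : ZMod (p ^ 2))
                rw [mul_zero]
            rwa [heq] at hsm
          rw [eq_top_iff]
          rintro m' -
          have hdecomp : m' = (m'.2.val : ℤ) • ((e, 1) : ZMod p × ZMod (p ^ 2))
              + ((m'.1 - ((m'.2.val : ℤ) : ZMod p) * e).val : ℤ) •
                ((1, 0) : ZMod p × ZMod (p ^ 2)) := by
            rw [zsmul_pair, zsmul_pair, Prod.mk_add_mk]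
            refine Prod.ext ?_ ?_
            · show m'.1 = ((m'.2.val : ℤ) : ZMod p) * e + _ * 1
              rw [val_cast_self' p hp]
              ring
            · show m'.2 = ((m'.2.val : ℤ) : ZMod (p ^ 2)) * 1 + _ * 0
              rw [val_cast_self p hp]
              ring
          rw [hdecomp]
          exact N.add_mem (N.smul_mem _ hgN) (N.smul_mem _ h10)
      rw [map_mkQ_eq_bot' hNK]
      exact smallsub_bot'
  -- no unit second coordinates: everything has second coordinate divisible by p
  · push_neg at h1
    have hpd : ∀ w : ZMod p × ZMod (p ^ 2), w ∈ N →
        ∃ t, w.2 = (p : ZMod (p ^ 2)) * t := fun w hw => not_unit_imp p hp (h1 w hw)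
    set S : Submodule ℤ (ZMod p × ZMod (p ^ 2)) :=
      span ℤ {((0 : ZMod p), (p : ZMod (p ^ 2)))} with hSdef
    have hSmall : SmallSub ℤ S := S_small p hp
    have hmemS : ∀ w : ZMod p × ZMod (p ^ 2), w ∈ N → w.1 = 0 → w ∈ S := by
      intro w hw hw1
      obtain ⟨t₂, ht₂⟩ := hpd w hw
      refine Submodule.mem_span_singleton.mpr ⟨(t₂.val : ℤ), ?_⟩
      rw [zsmul_pair]
      refine Prod.ext ?_ ?_
      · show _ * (0 : ZMod p) = w.1
        rw [mul_zero, hw1]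
      · show ((t₂.val : ℤ) : ZMod (p ^ 2)) * (p : ZMod (p ^ 2)) = w.2
        rw [val_cast_self p hp, ht₂]
        ring
    by_cases h2 : ∃ v ∈ N, v.1 ≠ 0
    · obtain ⟨v, hvN, hv1⟩ := h2
      set z : ℤ := (((v.1)⁻¹).val : ℤ) with hz
      obtain ⟨e, f, hef⟩ : ∃ e f, z • v = (e, f) := ⟨_, _, rfl⟩
      have hfst : e = 1 := by
        have h4 : (z • v).1 = (z : ZMod p) * v.1 :=
          congrArg Prod.fst (zsmul_pair p z v.1 v.2)
        rw [hef] at h4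
        rw [show e = (e, f).1 from rfl, h4, val_cast_self' p hp]
        exact inv_mul_cancel₀ hv1
      subst hfst
      have hgN : (((1 : ZMod p), f) : ZMod p × ZMod (p ^ 2)) ∈ N := hef ▸ N.smul_mem z hvN
      obtain ⟨t, ht⟩ := hpd _ hgN
      have ht' : f = (p : ZMod (p ^ 2)) * t := ht
      subst ht'
      refine ⟨span ℤ {((1, (p : ZMod (p ^ 2)) * t) : ZMod p × ZMod (p ^ 2))},
        ⟨_, compl_1t p hp t⟩, ?_, ?_⟩
      · rw [span_le, Set.singleton_subset_iff]; exact hgN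
      · have hNle : N ≤ (span ℤ {((1, (p : ZMod (p ^ 2)) * t) : ZMod p × ZMod (p ^ 2))}) ⊔ S := by
          intro m hm
          have hr : m - (m.1.val : ℤ) • ((1, (p : ZMod (p ^ 2)) * t) : ZMod p × ZMod (p ^ 2)) ∈ N :=
            N.sub_mem hm (N.smul_mem _ hgN)
          have hr1 : (m - (m.1.val : ℤ) •
              ((1, (p : ZMod (p ^ 2)) * t) : ZMod p × ZMod (p ^ 2))).1 = 0 := by
            show m.1 - ((m.1.val : ℤ) • ((1, (p : ZMod (p ^ 2)) * t) : ZMod p × ZMod (p ^ 2))).1 = 0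
            rw [show ((m.1.val : ℤ) • ((1, (p : ZMod (p ^ 2)) * t) : ZMod p × ZMod (p ^ 2))).1
                = ((m.1.val : ℤ) : ZMod p) * 1 from congrArg Prod.fst (zsmul_pair p _ _ _),
              val_cast_self' p hp, mul_one, sub_self]
          have hrS := hmemS _ hr hr1
          have hm2 : m = (m.1.val : ℤ) • ((1, (p : ZMod (p ^ 2)) * t) : ZMod p × ZMod (p ^ 2))
              + (m - (m.1.val : ℤ) • ((1, (p : ZMod (p ^ 2)) * t) : ZMod p × ZMod (p ^ 2))) := by
            abel
          rw [hm2]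
          exact Submodule.add_mem _
            (Submodule.mem_sup_left (Submodule.mem_span_singleton.mpr ⟨_, rfl⟩))
            (Submodule.mem_sup_right hrS)
        have hle2 : N.map (span ℤ {((1, (p : ZMod (p ^ 2)) * t) : ZMod p × ZMod (p ^ 2))}).mkQ
            ≤ S.map (span ℤ {((1, (p : ZMod (p ^ 2)) * t) : ZMod p × ZMod (p ^ 2))}).mkQ := by
          rintro q ⟨n, hn, rfl⟩
          obtain ⟨uK, huK, s, hs, hsum⟩ := Submodule.mem_sup.mp (hNle hn)
          refine ⟨s, hs, ?_⟩
          rw [← hsum, map_add]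
          have h0 : (span ℤ {((1, (p : ZMod (p ^ 2)) * t) : ZMod p × ZMod (p ^ 2))}).mkQ uK = 0 := by
            rw [Submodule.mkQ_apply, Submodule.Quotient.mk_eq_zero]; exact huK
          rw [h0, zero_add]
        exact smallsub_mono' hle2 (smallsub_map' (Submodule.mkQ_surjective _) hSmall)
    · push_neg at h2
      refine ⟨⊥, ⟨⊤, isCompl_bot_top⟩, bot_le, ?_⟩
      have hNS : N ≤ S := fun m hm => hmemS m hm (h2 m hm)
      have hle2 : N.map (⊥ : Submodule ℤ (ZMod p × ZMod (p ^ 2))).mkQ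
          ≤ S.map (⊥ : Submodule ℤ (ZMod p × ZMod (p ^ 2))).mkQ := Submodule.map_mono hNS
      exact smallsub_mono' hle2 (smallsub_map' (Submodule.mkQ_surjective _) hSmall)

theorem notD3 (p : ℕ) (hp : p.Prime) : ¬ CondD3 ℤ (ZMod p × ZMod (p ^ 2)) := by
  intro h
  haveI : NeZero p := ⟨hp.ne_zero⟩
  haveI : NeZero (p ^ 2) := ⟨pow_ne_zero 2 hp.ne_zero⟩
  have hK : IsDirectSummand ℤ (span ℤ {((0, 1) : ZMod p × ZMod (p ^ 2))}) :=
    ⟨_, compl_e1 p hp 0⟩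
  have hL : IsDirectSummand ℤ (span ℤ {((1, 1) : ZMod p × ZMod (p ^ 2))}) :=
    ⟨_, compl_e1 p hp 1⟩
  have hsup : span ℤ {((0, 1) : ZMod p × ZMod (p ^ 2))}
      ⊔ span ℤ {((1, 1) : ZMod p × ZMod (p ^ 2))} = ⊤ := by
    rw [eq_top_iff]
    rintro ⟨x, y⟩ -
    refine Submodule.mem_sup.mpr
      ⟨((y - ((x.val : ℤ) : ZMod (p ^ 2))).val : ℤ) • ((0, 1) : ZMod p × ZMod (p ^ 2)),
      Submodule.mem_span_singleton.mpr ⟨_, rfl⟩,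
      (x.val : ℤ) • ((1, 1) : ZMod p × ZMod (p ^ 2)),
      Submodule.mem_span_singleton.mpr ⟨_, rfl⟩, ?_⟩
    rw [zsmul_pair, zsmul_pair, Prod.mk_add_mk, Prod.mk.injEq]
    constructor
    · rw [val_cast_self' p hp]; ring
    · rw [val_cast_self p hp]; ring
  have hKL : span ℤ {((0, 1) : ZMod p × ZMod (p ^ 2))}
      ⊓ span ℤ {((1, 1) : ZMod p × ZMod (p ^ 2))}
      = span ℤ {((0 : ZMod p), (p : ZMod (p ^ 2)))} := by
    apply le_antisymm
    · rintro x ⟨hx1, hx2⟩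
      obtain ⟨b, rfl⟩ := Submodule.mem_span_singleton.mp hx2
      obtain ⟨a, ha⟩ := Submodule.mem_span_singleton.mp hx1
      rw [zsmul_pair, zsmul_pair, Prod.mk.injEq] at ha
      obtain ⟨ha1, ha2⟩ := ha
      rw [mul_zero, mul_one] at ha1
      have hb0 : (b : ZMod p) = 0 := ha1.symm
      obtain ⟨b', rfl⟩ := (ZMod.intCast_zmod_eq_zero_iff_dvd b p).mp hb0
      refine Submodule.mem_span_singleton.mpr ⟨b', ?_⟩
      rw [zsmul_pair, zsmul_pair]
      refine Prod.ext ?_ ?_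
      · show (b' : ZMod p) * 0 = (((p : ℤ) * b' : ℤ) : ZMod p) * 1
        push_cast
        simp [ZMod.natCast_self]
      · show (b' : ZMod (p ^ 2)) * (p : ZMod (p ^ 2)) = (((p : ℤ) * b' : ℤ) : ZMod (p ^ 2)) * 1
        push_cast
        ring
    · rw [span_le, Set.singleton_subset_iff]
      refine ⟨?_, ?_⟩
      · refine Submodule.mem_span_singleton.mpr ⟨(p : ℤ), ?_⟩
        rw [zsmul_pair]
        refine Prod.ext ?_ ?_ <;> push_cast <;> simp
      · refine Submodule.mem_span_singleton.mpr ⟨(p : ℤ), ?_⟩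
        rw [zsmul_pair]
        refine Prod.ext ?_ ?_ <;> push_cast <;> simp
  obtain ⟨C, hC⟩ := h _ _ hK hL hsup
  rw [hKL] at hC
  have hCtop : C = ⊤ := S_small p hp C (codisjoint_iff.mp hC.codisjoint)
  have hSb : span ℤ {((0 : ZMod p), (p : ZMod (p ^ 2)))} = ⊥ := by
    have hd := disjoint_iff.mp hC.disjoint
    rwa [hCtop, inf_top_eq] at hd
  have hmem : ((0 : ZMod p), (p : ZMod (p ^ 2)))
      ∈ span ℤ {((0 : ZMod p), (p : ZMod (p ^ 2)))} := Submodule.mem_span_singleton_self _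
  rw [hSb, Submodule.mem_bot] at hmem
  have hp0 : (p : ZMod (p ^ 2)) = 0 := congrArg Prod.snd hmem
  rw [ZMod.natCast_eq_zero_iff] at hp0
  have hle := Nat.le_of_dvd hp.pos hp0
  nlinarith [hp.two_le]

theorem stmt18 (p : ℕ) (hp : p.Prime) :
    Lifting ℤ (ZMod p × ZMod (p ^ 2)) ∧
      (∀ D : Submodule ℤ (ZMod p × ZMod (p ^ 2)), IsDirectSummand ℤ D →
        HSupplemented ℤ ↥D) ∧
      ¬ CondD3 ℤ (ZMod p × ZMod (p ^ 2)) := by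
  refine ⟨lifting_M p hp, ?_, notD3 p hp⟩
  rintro D ⟨C, hC⟩
  exact lifting_hsupp (lifting_summand hC (lifting_M p hp))
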